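/- For an odd prime p and H, D ∈ ℤ/p such that t² − Ht − D has no root in ℤ/p, the group (C, ⊙) of points of the conic x² + Hxy − Dy² = 1 over ℤ/p is cyclic (of order p + 1). -/

import Mathlib

/-- The conic product `(x₁,y₁) ⊙ (x₂,y₂) = (x₁x₂ + D y₁y₂, y₁x₂ + x₁y₂ + H y₁y₂)`. -/
def conicMul {R : Type*} [CommRing R] (H D : R) (P Q : R × R) : R × R :=
  (P.1 * Q.1 + D * P.2 * Q.2, P.2 * Q.1 + P.1 * Q.2 + H * P.2 * Q.2)

/-- `n`-fold `⊙`-power of a point, with `P^{⊙0} = (1,0)`. -/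
def conicPow {R : Type*} [CommRing R] (H D : R) (P : R × R) : ℕ → R × R
  | 0 => (1, 0)
  | n + 1 => conicMul H D P (conicPow H D P n)

open Polynomial

namespace ConicAux

variable {p : ℕ} [Fact p.Prime] (H D : ZMod p)

noncomputable def cpoly : (ZMod p)[X] := X ^ 2 - C H * X - C D

lemma cpoly_monic : (cpoly H D).Monic := by
  have h : cpoly H D = X ^ (1 + 1) - (C H * X + C D) := by rw [cpoly]; ring
  rw [h]
  exact monic_X_pow_sub (lt_of_le_of_lt degree_linear_le (by norm_num))

lemma cpoly_natDegree : (cpoly H D).natDegree = 2 := by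
  have h : cpoly H D = C 1 * X ^ 2 + C (-H) * X + C (-D) := by rw [cpoly]; ring_nf; simp [C_1]; ring
  rw [h]; exact natDegree_quadratic one_ne_zero

lemma cpoly_eval (t : ZMod p) : (cpoly H D).eval t = t ^ 2 - H * t - D := by
  simp [cpoly]

lemma cpoly_irred (hirr : ∀ t : ZMod p, t ^ 2 - H * t - D ≠ 0) : Irreducible (cpoly H D) := by
  rw [irreducible_iff_roots_eq_zero_of_degree_le_three (by rw [cpoly_natDegree])
    (by rw [cpoly_natDegree]; norm_num)]
  apply Multiset.eq_zero_of_forall_notMem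
  intro t ht
  rw [mem_roots ((cpoly_monic H D).ne_zero)] at ht
  exact hirr t (by rw [← cpoly_eval H D t]; exact ht)

section Fld

variable [Fact (Irreducible (cpoly H D))]

/-- The embedding of a point into the quadratic extension. -/
noncomputable def emb (P : ZMod p × ZMod p) : AdjoinRoot (cpoly H D) :=
  AdjoinRoot.of _ P.1 + AdjoinRoot.of _ P.2 * AdjoinRoot.root _

lemma root_sq : (AdjoinRoot.root (cpoly H D)) ^ 2 =
    AdjoinRoot.of _ H * AdjoinRoot.root _ + AdjoinRoot.of _ D := by
  have h : AdjoinRoot.mk (cpoly H D) (X ^ 2 - C H * X - C D) = 0 := AdjoinRoot.mk_self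
  simp only [map_sub, map_mul, map_pow, AdjoinRoot.mk_X, AdjoinRoot.mk_C] at h
  linear_combination h

lemma emb_mul (P Q : ZMod p × ZMod p) :
    emb H D (conicMul H D P Q) = emb H D P * emb H D Q := by
  simp only [emb, conicMul, map_add, map_mul]
  linear_combination (-(AdjoinRoot.of (cpoly H D) P.2 * AdjoinRoot.of (cpoly H D) Q.2)) *
    root_sq H D

lemma emb_one : emb H D (1, 0) = 1 := by simp [emb]

lemma emb_conicPow (g : ZMod p × ZMod p) (n : ℕ) :
    emb H D (conicPow H D g n) = emb H D g ^ n := by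
  induction n with
  | zero => simpa [conicPow] using emb_one H D
  | succ n ih => rw [conicPow, emb_mul, ih, pow_succ]; ring

lemma root_ne (hirr : ∀ t : ZMod p, t ^ 2 - H * t - D ≠ 0) (c : ZMod p) :
    AdjoinRoot.root (cpoly H D) ≠ AdjoinRoot.of _ c := by
  intro h
  apply hirr c
  apply (AdjoinRoot.of (cpoly H D)).injective
  have h2 := root_sq H D
  rw [h] at h2
  push_cast [map_sub, map_mul, map_pow, map_zero]
  linear_combination h2

lemma emb_injective (hirr : ∀ t : ZMod p, t ^ 2 - H * t - D ≠ 0) :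
    Function.Injective (emb H D) := by
  rintro ⟨x, y⟩ ⟨x', y'⟩ h
  simp only [emb] at h
  by_cases hy : y = y'
  · subst hy
    have : AdjoinRoot.of (cpoly H D) x = AdjoinRoot.of (cpoly H D) x' := by
      linear_combination h
    simp [(AdjoinRoot.of (cpoly H D)).injective this]
  · exfalso
    apply root_ne H D hirr ((x - x') * (y' - y)⁻¹)
    have hyy : (AdjoinRoot.of (cpoly H D)) (y' - y) ≠ 0 := by
      simp only [ne_eq, map_eq_zero_iff _ (AdjoinRoot.of (cpoly H D)).injective, sub_eq_zero]
      exact Ne.symm hy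
    have hyy' : (AdjoinRoot.of (cpoly H D)) y' - (AdjoinRoot.of (cpoly H D)) y ≠ 0 := by
      rw [← map_sub]; exact hyy
    have key : ((AdjoinRoot.of (cpoly H D)) y' - (AdjoinRoot.of (cpoly H D)) y) *
        AdjoinRoot.root (cpoly H D)
        = (AdjoinRoot.of (cpoly H D)) x - (AdjoinRoot.of (cpoly H D)) x' := by
      linear_combination -h
    rw [map_mul, map_inv₀, map_sub, map_sub, ← key]
    field_simp

lemma charPK : CharP (AdjoinRoot (cpoly H D)) p := by
  have := charP_of_injective_algebraMap
    (algebraMap (ZMod p) (AdjoinRoot (cpoly H D))).injective p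
  exact this

lemma root_pow_card_ne (hirr : ∀ t : ZMod p, t ^ 2 - H * t - D ≠ 0) :
    AdjoinRoot.root (cpoly H D) ^ p ≠ AdjoinRoot.root (cpoly H D) := by
  intro heq
  have h1 : 1 < p := (Fact.out : p.Prime).one_lt
  set q : (AdjoinRoot (cpoly H D))[X] := X ^ p - X with hqdef
  have hq0 : q ≠ 0 := FiniteField.X_pow_card_sub_X_ne_zero _ h1
  have hqd : q.natDegree = p := FiniteField.X_pow_card_sub_X_natDegree_eq _ h1
  set S : Finset (AdjoinRoot (cpoly H D)) := insert (AdjoinRoot.root (cpoly H D))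
      (Finset.image (AdjoinRoot.of (cpoly H D)) Finset.univ) with hSdef
  have hScard : S.card = p + 1 := by
    rw [hSdef, Finset.card_insert_of_notMem, Finset.card_image_of_injective _
      (AdjoinRoot.of (cpoly H D)).injective, Finset.card_univ, ZMod.card]
    simp only [Finset.mem_image]
    rintro ⟨c, -, hc⟩
    exact root_ne H D hirr c hc.symm
  have hsub : S ⊆ q.roots.toFinset := by
    intro z hz
    rw [Multiset.mem_toFinset, mem_roots hq0]
    rcases Finset.mem_insert.mp hz with rfl | hz
    · simp [hqdef, IsRoot.def, eval_sub, eval_pow, eval_X, heq]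
    · obtain ⟨c, -, rfl⟩ := Finset.mem_image.mp hz
      simp only [hqdef, IsRoot.def, eval_sub, eval_pow, eval_X, ← map_pow, ZMod.pow_card,
        sub_self]
  have hc1 := Finset.card_le_card hsub
  have hc2 := Multiset.toFinset_card_le q.roots
  have hc3 := q.card_roots'
  omega

lemma root_pow_card (hirr : ∀ t : ZMod p, t ^ 2 - H * t - D ≠ 0) :
    AdjoinRoot.root (cpoly H D) ^ p
      = AdjoinRoot.of _ H - AdjoinRoot.root (cpoly H D) := by
  haveI := charPK H D
  have hq : (AdjoinRoot.root (cpoly H D) ^ p) ^ 2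
      = AdjoinRoot.of _ H * AdjoinRoot.root (cpoly H D) ^ p + AdjoinRoot.of _ D := by
    have h2 := congrArg (· ^ p) (root_sq H D)
    simp only [add_pow_char, mul_pow, ← map_pow, ZMod.pow_card] at h2
    calc (AdjoinRoot.root (cpoly H D) ^ p) ^ 2
        = (AdjoinRoot.root (cpoly H D) ^ 2) ^ p := by
          rw [← pow_mul, ← pow_mul, Nat.mul_comm]
      _ = _ := by rw [h2]
  have factored : (AdjoinRoot.root (cpoly H D) ^ p - AdjoinRoot.root (cpoly H D)) *
      (AdjoinRoot.root (cpoly H D) ^ p + AdjoinRoot.root (cpoly H D) - AdjoinRoot.of _ H)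
      = 0 := by
    linear_combination hq - root_sq H D
  rcases mul_eq_zero.mp factored with h | h
  · exact absurd (by linear_combination h) (root_pow_card_ne H D hirr)
  · linear_combination h

lemma emb_pow (hirr : ∀ t : ZMod p, t ^ 2 - H * t - D ≠ 0) (P : ZMod p × ZMod p) :
    emb H D P ^ (p + 1)
      = AdjoinRoot.of _ (P.1 ^ 2 + H * P.1 * P.2 - D * P.2 ^ 2) := by
  haveI := charPK H D
  have hfrob : emb H D P ^ p = AdjoinRoot.of _ P.1 +
      AdjoinRoot.of _ P.2 * (AdjoinRoot.of _ H - AdjoinRoot.root _) := by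
    rw [emb, add_pow_char, mul_pow, ← map_pow, ← map_pow, ZMod.pow_card, ZMod.pow_card,
      root_pow_card H D hirr]
  rw [pow_succ, hfrob, emb]
  simp only [map_add, map_sub, map_mul, map_pow]
  linear_combination (-(AdjoinRoot.of (cpoly H D) P.2 ^ 2)) * root_sq H D

lemma emb_surjective : Function.Surjective (emb H D) := by
  intro z
  obtain ⟨g, rfl⟩ := AdjoinRoot.mk_surjective z
  have hmon := cpoly_monic H D
  set r := g %ₘ cpoly H D with hr
  have hne1 : cpoly H D ≠ 1 := by
    intro h1
    have := cpoly_natDegree H D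
    rw [h1, natDegree_one] at this
    omega
  have hdeg : r.natDegree ≤ 1 := by
    have := natDegree_modByMonic_lt g hmon hne1
    rw [cpoly_natDegree] at this
    rw [hr]
    omega
  refine ⟨(r.coeff 0, r.coeff 1), ?_⟩
  have hrep : r = C (r.coeff 1) * X + C (r.coeff 0) := eq_X_add_C_of_natDegree_le_one hdeg
  have hmk : AdjoinRoot.mk (cpoly H D) r = AdjoinRoot.mk (cpoly H D) g := by
    rw [hr]
    apply AdjoinRoot.mk_eq_mk.mpr
    exact ⟨-(g /ₘ cpoly H D), by linear_combination (modByMonic_add_div g (cpoly H D))⟩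
  rw [emb, ← hmk]
  conv_rhs => rw [hrep]
  simp only [map_add, map_mul, AdjoinRoot.mk_X, AdjoinRoot.mk_C]
  ring

lemma finiteK : Finite (AdjoinRoot (cpoly H D)) := by
  haveI : Module.Finite (ZMod p) (AdjoinRoot (cpoly H D)) :=
    Module.Finite.of_basis (AdjoinRoot.powerBasis (cpoly_monic H D).ne_zero).basis
  exact Module.finite_of_finite (ZMod p)

lemma cardK : Nat.card (AdjoinRoot (cpoly H D)) = p ^ 2 := by
  haveI := finiteK H D
  haveI := Fintype.ofFinite (AdjoinRoot (cpoly H D))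
  rw [Nat.card_eq_fintype_card, Module.card_eq_pow_finrank (K := ZMod p), ZMod.card,
    (AdjoinRoot.powerBasis (cpoly_monic H D).ne_zero).finrank,
    show (AdjoinRoot.powerBasis (cpoly_monic H D).ne_zero).dim = (cpoly H D).natDegree from rfl,
    cpoly_natDegree]

end Fld

end ConicAux

open ConicAux

/-- for an odd prime `p` and `H, D ∈ ℤ/p` such that `t² − Ht − D`
has no root in `ℤ/p`, the group `(C, ⊙)` of points of the conic
`x² + Hxy − Dy² = 1` over `ℤ/p` is cyclic (of order `p + 1`): there is a point
`g ∈ C` whose `⊙`-powers exhaust `C`. -/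
theorem conic_cyclic (p : ℕ) (hp : p.Prime) (hodd : Odd p) (H D : ZMod p)
    (hirr : ∀ t : ZMod p, t ^ 2 - H * t - D ≠ 0) :
    (∃ g ∈ {P : ZMod p × ZMod p | P.1 ^ 2 + H * P.1 * P.2 - D * P.2 ^ 2 = 1},
      ∀ P ∈ {P : ZMod p × ZMod p | P.1 ^ 2 + H * P.1 * P.2 - D * P.2 ^ 2 = 1},
        ∃ n : ℕ, conicPow H D g n = P) ∧
    Set.ncard {P : ZMod p × ZMod p | P.1 ^ 2 + H * P.1 * P.2 - D * P.2 ^ 2 = 1}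
      = p + 1 := by
  haveI := Fact.mk hp
  haveI := Fact.mk (cpoly_irred H D hirr)
  haveI := finiteK H D
  haveI := Fintype.ofFinite (AdjoinRoot (cpoly H D))
  set S : Set (ZMod p × ZMod p) :=
    {P : ZMod p × ZMod p | P.1 ^ 2 + H * P.1 * P.2 - D * P.2 ^ 2 = 1} with hS
  -- membership criterion
  have memS_iff : ∀ P : ZMod p × ZMod p, P ∈ S ↔ emb H D P ^ (p + 1) = 1 := by
    intro P
    rw [emb_pow H D hirr P]
    constructor
    · intro hP
      rw [show P.1 ^ 2 + H * P.1 * P.2 - D * P.2 ^ 2 = 1 from hP, map_one]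
    · intro hP
      have h1 : AdjoinRoot.of (cpoly H D) (P.1 ^ 2 + H * P.1 * P.2 - D * P.2 ^ 2)
          = AdjoinRoot.of (cpoly H D) 1 := by rw [hP, map_one]
      exact (AdjoinRoot.of (cpoly H D)).injective h1
  -- the units group
  have hcardU : Fintype.card (AdjoinRoot (cpoly H D))ˣ = p ^ 2 - 1 := by
    rw [Fintype.card_units, show Fintype.card (AdjoinRoot (cpoly H D)) = Nat.card _ from
      (Nat.card_eq_fintype_card).symm, cardK H D]
  obtain ⟨g, hg⟩ := IsCyclic.exists_generator (α := (AdjoinRoot (cpoly H D))ˣ)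
  have hordg : orderOf g = p ^ 2 - 1 := by
    rw [orderOf_eq_card_of_forall_mem_zpowers hg, Nat.card_eq_fintype_card, hcardU]
  have hfact : (p - 1) * (p + 1) = p ^ 2 - 1 := by
    obtain ⟨k, rfl⟩ := Nat.exists_eq_add_of_le hp.pos
    simp only [Nat.add_sub_cancel_left, Nat.add_sub_cancel]
    exact (Nat.sub_eq_of_eq_add (by ring)).symm
  set h : (AdjoinRoot (cpoly H D))ˣ := g ^ (p - 1) with hh
  have hordh : orderOf h = p + 1 := by
    rw [hh, orderOf_pow, hordg, ← hfact, Nat.gcd_eq_right ⟨p + 1, rfl⟩,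
      Nat.mul_div_cancel_left _ (by have := hp.two_le; omega : 0 < p - 1)]
  have hmemh : ∀ u : (AdjoinRoot (cpoly H D))ˣ, u ^ (p + 1) = 1 → ∃ n : ℕ, h ^ n = u := by
    intro u hu
    obtain ⟨k, hk'⟩ := (mem_powers_iff_mem_zpowers).mpr (hg u)
    have hk : g ^ k = u := hk'
    have hdvd : orderOf g ∣ k * (p + 1) :=
      orderOf_dvd_of_pow_eq_one (by rw [pow_mul, hk, hu])
    rw [hordg, ← hfact] at hdvd
    have h2 : (p - 1) ∣ k :=
      (Nat.mul_dvd_mul_iff_right (show 0 < p + 1 by omega)).mp hdvd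
    obtain ⟨m, rfl⟩ := h2
    exact ⟨m, by rw [hh, ← pow_mul]; exact hk⟩
  have hconv : ∀ u : (AdjoinRoot (cpoly H D))ˣ, u ∈ Subgroup.zpowers h → u ^ (p + 1) = 1 := by
    intro u hu
    obtain ⟨m, hm'⟩ := (mem_powers_iff_mem_zpowers).mpr hu
    have hm : h ^ m = u := hm'
    rw [← hm, ← pow_mul, mul_comm, pow_mul, ← hordh, pow_orderOf_eq_one, one_pow]
  -- sets in K and Kˣ
  set V : Set (AdjoinRoot (cpoly H D)) := {z | z ^ (p + 1) = 1} with hV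
  set T : Set (AdjoinRoot (cpoly H D))ˣ := {u | u ^ (p + 1) = 1} with hT
  have himg : emb H D '' S = V := by
    ext z
    constructor
    · rintro ⟨P, hP, rfl⟩; exact (memS_iff P).mp hP
    · intro hz
      obtain ⟨P, rfl⟩ := emb_surjective H D z
      exact ⟨P, (memS_iff P).mpr hz, rfl⟩
  have hVT : V = Units.val '' T := by
    ext z
    constructor
    · intro hz
      have hzu : IsUnit z := IsUnit.of_mul_eq_one (a := z) (z ^ p) (by rw [← pow_succ']; exact hz)
      refine ⟨hzu.unit, ?_, hzu.unit_spec⟩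
      apply Units.ext
      rw [Units.val_pow_eq_pow_val, hzu.unit_spec, Units.val_one]
      exact hz
    · rintro ⟨u, hu, rfl⟩
      rw [hV, Set.mem_setOf_eq, ← Units.val_pow_eq_pow_val, hu, Units.val_one]
  have hTz : T = ↑(Subgroup.zpowers h) := by
    ext u
    constructor
    · intro hu
      obtain ⟨n, hn⟩ := hmemh u hu
      exact ⟨(n : ℤ), by show h ^ (n : ℤ) = u; rw [zpow_natCast, hn]⟩
    · intro hu; exact hconv u hu
  -- cardinality
  have hcardS : S.ncard = p + 1 := by
    rw [← Set.ncard_image_of_injective S (emb_injective H D hirr), himg, hVT,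
      Set.ncard_image_of_injective T Units.val_injective, hTz]
    rw [← Nat.card_coe_set_eq]
    rw [show Nat.card ↥(↑(Subgroup.zpowers h) : Set (AdjoinRoot (cpoly H D))ˣ)
      = Nat.card ↥(Subgroup.zpowers h) from rfl]
    rw [Nat.card_zpowers, hordh]
  refine ⟨?_, hcardS⟩
  -- generator
  have hhT : (h : AdjoinRoot (cpoly H D)) ∈ V := by
    rw [hV, Set.mem_setOf_eq, ← Units.val_pow_eq_pow_val,
      hconv h (Subgroup.mem_zpowers h), Units.val_one]
  obtain ⟨g₀, hg₀⟩ := emb_surjective H D (h : AdjoinRoot (cpoly H D))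
  refine ⟨g₀, (memS_iff g₀).mpr (by rw [hg₀]; exact hhT), ?_⟩
  intro P hP
  have hPV : emb H D P ∈ V := (memS_iff P).mp hP
  have hPu : IsUnit (emb H D P) :=
    IsUnit.of_mul_eq_one (a := emb H D P) (emb H D P ^ p) (by rw [← pow_succ']; exact hPV)
  have hPu1 : hPu.unit ^ (p + 1) = 1 := by
    apply Units.ext
    rw [Units.val_pow_eq_pow_val, hPu.unit_spec, Units.val_one]
    exact hPV
  obtain ⟨n, hn⟩ := hmemh hPu.unit hPu1
  refine ⟨n, emb_injective H D hirr ?_⟩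
  rw [emb_conicPow, hg₀, ← Units.val_pow_eq_pow_val, hn, hPu.unit_spec]
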